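/- Let Γ = {v^1 ∧ α^1, ..., v^m ∧ α^m} where each v^k is a distinct full instantiation (term) over variables V_l and each α^k is an AND-decomposable NNF over variables V_r, with V_l ∩ V_r = ∅. Then the disjunction ∨_k (v^k ∧ α^k) is an AND-decomposable NNF, and an assignment (v_l, v_r) satisfies it iff v_l = v^k for some k and v_r satisfies α^k. -/
import Mathlib


/-- NNF circuits over discrete variables, with literals of the form `variable = value`. -/
inductive DNNF (V : Type) (D : V → Type) : Type
  | lit (v : V) (d : D v)
  | and (a b : DNNF V D)
  | or (a b : DNNF V D)

namespace DNNF

variable {V : Type} {D : V → Type}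

/-- Semantics w.r.t. a joint assignment `f` of values to all variables. -/
def eval (f : ∀ v, D v) : DNNF V D → Prop
  | lit v d => f v = d
  | and a b => eval f a ∧ eval f b
  | or a b => eval f a ∨ eval f b

/-- The set of variables mentioned by a circuit. -/
def vars : DNNF V D → Set V
  | lit v _ => {v}
  | and a b => vars a ∪ vars b
  | or a b => vars a ∪ vars b

/-- AND-decomposability: conjuncts of each AND node mention disjoint variable sets. -/
def andDec : DNNF V D → Prop
  | lit _ _ => True
  | and a b => Disjoint (vars a) (vars b) ∧ andDec a ∧ andDec b
  | or a b => andDec a ∧ andDec b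

/-- Disjunction of a nonempty collection of circuits. -/
def bigOr (x : DNNF V D) (l : List (DNNF V D)) : DNNF V D := l.foldl .or x

end DNNF


namespace DNNF
variable {V : Type} {D : V → Type}

lemma andDec_foldl (l : List (DNNF V D)) (x : DNNF V D) :
    andDec (l.foldl .or x) ↔ andDec x ∧ ∀ y ∈ l, andDec y := by
  induction l generalizing x with
  | nil => simp
  | cons a l ih =>
    simp only [List.foldl_cons, ih, List.mem_cons]
    constructor
    · rintro ⟨⟨hx, ha⟩, h⟩
      exact ⟨hx, fun y hy => hy.elim (fun e => e ▸ ha) (h y)⟩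
    · rintro ⟨hx, h⟩
      exact ⟨⟨hx, h a (Or.inl rfl)⟩, fun y hy => h y (Or.inr hy)⟩

lemma eval_foldl (f : ∀ v, D v) (l : List (DNNF V D)) (x : DNNF V D) :
    eval f (l.foldl .or x) ↔ eval f x ∨ ∃ y ∈ l, eval f y := by
  induction l generalizing x with
  | nil => simp
  | cons a l ih =>
    simp only [List.foldl_cons, ih, List.mem_cons]
    constructor
    · rintro (((h|h)|⟨y,hy,h⟩))
      · exact Or.inl h
      · exact Or.inr ⟨a, Or.inl rfl, h⟩
      · exact Or.inr ⟨y, Or.inr hy, h⟩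
    · rintro (h|⟨y,(rfl|hy),h⟩)
      · exact Or.inl (Or.inl h)
      · exact Or.inl (Or.inr h)
      · exact Or.inr ⟨y, hy, h⟩

end DNNF

/-- let `Γ = {v¹ ∧ α¹, …}` where each `vᵏ` is a distinct full
instantiation (represented by a term `t k`) over the left variables `V_l = L` and each
`αᵏ` is an AND-decomposable NNF over the right variables `V_r = R` (disjoint from `V_l`,
realized as the two summands of `L ⊕ R`). Then the disjunction `∨ₖ (vᵏ ∧ αᵏ)` is an
AND-decomposable NNF, and an assignment `f = (v_l, v_r)` satisfies it iff `v_l = vᵏ`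
for some `k` and `v_r` satisfies `αᵏ`. -/
theorem stmt12 {L R : Type} {D : L ⊕ R → Type} (m : ℕ)
    (v : Fin (m + 1) → ∀ l : L, D (Sum.inl l))
    (hdistinct : Function.Injective v)
    (t α : Fin (m + 1) → DNNF (L ⊕ R) D)
    -- each `t k` is a term over `V_l` whose unique model on `V_l` is `v k`
    (htvars : ∀ k, ∀ x ∈ (t k).vars, x.isLeft)
    (htsem : ∀ k (f : ∀ x, D x), (t k).eval f ↔ ∀ l : L, f (Sum.inl l) = v k l)
    (htdec : ∀ k, (t k).andDec)
    -- each `α k` is an AND-decomposable NNF over `V_r`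
    (havars : ∀ k, ∀ x ∈ (α k).vars, x.isRight)
    (hadec : ∀ k, (α k).andDec)
    (φ : DNNF (L ⊕ R) D)
    (hφ : φ = DNNF.bigOr ((t 0).and (α 0))
        (List.ofFn fun k : Fin m => (t k.succ).and (α k.succ))) :
    φ.andDec ∧
      ∀ f : ∀ x, D x,
        φ.eval f ↔ ∃ k, (∀ l : L, f (Sum.inl l) = v k l) ∧ (α k).eval f := by
  subst hφ
  have hand : ∀ k, ((t k).and (α k)).andDec := by
    intro k
    refine ⟨?_, htdec k, hadec k⟩
    rw [Set.disjoint_left]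
    intro x hx hx'
    have := htvars k x hx
    have := havars k x hx'
    cases x <;> simp_all
  have heval : ∀ k (f : ∀ x, D x),
      ((t k).and (α k)).eval f ↔ (∀ l : L, f (Sum.inl l) = v k l) ∧ (α k).eval f := by
    intro k f
    simp only [DNNF.eval, htsem]
  constructor
  · rw [DNNF.bigOr, DNNF.andDec_foldl]
    refine ⟨hand 0, ?_⟩
    intro y hy
    simp only [List.mem_ofFn] at hy
    obtain ⟨k, rfl⟩ := hy
    exact hand k.succ
  · intro f
    rw [DNNF.bigOr, DNNF.eval_foldl, Fin.exists_fin_succ]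
    simp only [List.mem_ofFn, heval]
    constructor
    · rintro (h | ⟨y, ⟨k, rfl⟩, h⟩)
      · exact Or.inl h
      · exact Or.inr ⟨k, (heval _ f).mp h⟩
    · rintro (h | ⟨k, h⟩)
      · exact Or.inl h
      · exact Or.inr ⟨_, ⟨k, rfl⟩, (heval _ f).mpr h⟩
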